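/- arXiv:1601.00246 — 2 statements merged into one kernel-verified Lean document; each statement's English description precedes it below -/
import Mathlib

section
/- Let two point vehicles $j-1$ (leader) and $j$ (follower) have positions $x_{j-1} > x_j$ and velocities $v_{j-1}, v_j \geq 0$ at time $t$. Suppose both perform the maximum braking maneuver: acceleration $u_m < 0$ until velocity reaches $0$, then zero acceleration. If $x_{j-1}(t) - x_j(t) \geq L + \max\{0, (v_j^2 - v_{j-1}^2)/(-2u_m)\}$, then $x_{j-1}(s) - x_j(s) \geq L$ for all $s \geq t$ during and after the maneuver. -/
/-- Position at time `s ≥ t` of a vehicle at `(x0, v0)` at time `t` performing the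
maximum braking maneuver with deceleration `um < 0`. -/
noncomputable def mbmPos (um x0 v0 t s : ℝ) : ℝ :=
  if s - t ≤ v0 / (-um) then x0 + v0 * (s - t) + um * (s - t) ^ 2 / 2
  else x0 + v0 ^ 2 / (-2 * um)

theorem stmt_5 (um L t xL xF vL vF : ℝ)
    (hum : um < 0) (hL : 0 < L)
    (hvL : 0 ≤ vL) (hvF : 0 ≤ vF) (hx : xF < xL)
    (hgap : xL - xF ≥ L + max 0 ((vF ^ 2 - vL ^ 2) / (-2 * um))) :
    ∀ s, t ≤ s → mbmPos um xL vL t s - mbmPos um xF vF t s ≥ L := by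
  intro s hs
  have hum' : (0:ℝ) < -um := by linarith
  have hum2 : (0:ℝ) < -2 * um := by linarith
  have hτ : 0 ≤ s - t := by linarith
  have hgap1 : xL - xF ≥ L := le_trans (by simp [le_max_left]) hgap
  have hgap2 : vF ^ 2 - vL ^ 2 ≤ (xL - xF - L) * (-2 * um) := by
    have h := le_trans (by simp [le_max_right] : L + (vF ^ 2 - vL ^ 2) / (-2 * um) ≤
      L + max 0 ((vF ^ 2 - vL ^ 2) / (-2 * um))) hgap
    have : (vF ^ 2 - vL ^ 2) / (-2 * um) ≤ xL - xF - L := by linarith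
    exact (div_le_iff₀ hum2).mp this
  -- final-gap inequality
  have hfin : vL ^ 2 / (-2 * um) - vF ^ 2 / (-2 * um) ≥ L - (xL - xF) := by
    have e : vL ^ 2 / (-2 * um) - vF ^ 2 / (-2 * um) = (vL ^ 2 - vF ^ 2) / (-2 * um) :=
      (sub_div _ _ _).symm
    rw [e, ge_iff_le, le_div_iff₀ hum2]
    nlinarith
  -- peak bound for the follower parabola
  have peakF : vF * (s - t) + um * (s - t) ^ 2 / 2 ≤ vF ^ 2 / (-2 * um) := by
    rw [le_div_iff₀ hum2]
    nlinarith [sq_nonneg (vF + um * (s - t))]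
  unfold mbmPos
  split_ifs with h1 h2 h2
  · -- both braking
    have hF : (s - t) * -um ≤ vF := (le_div_iff₀ hum').mp h2
    have hL1 : (s - t) * -um ≤ vL := (le_div_iff₀ hum').mp h1
    rcases le_total vF vL with hv | hv
    · nlinarith
    · nlinarith [sq_nonneg (vL - vF), sq_nonneg (vL + um * (s - t))]
  · -- leader braking, follower stopped
    have hF : vF < (s - t) * -um := (div_lt_iff₀ hum').mp (lt_of_not_ge h2)
    have hL1 : (s - t) * -um ≤ vL := (le_div_iff₀ hum').mp h1
    have key : vF ^ 2 / (-2 * um) ≤ vL * (s - t) + um * (s - t) ^ 2 / 2 := by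
      rw [div_le_iff₀ hum2]
      nlinarith [mul_nonneg (mul_nonneg hum'.le hτ) (by linarith : 0 ≤ vL - (s - t) * -um),
        mul_nonneg (by linarith : 0 ≤ (s - t) * -um - vF) (by linarith : 0 ≤ (s - t) * -um + vF)]
    linarith
  · -- leader stopped, follower braking
    linarith
  · -- both stopped
    linarith
end

section
/- Consider two vehicles with double-integrator dynamics where the follower applies the unsaturated safe-following control $u_j = (\frac{v_{j-1}}{v_j}(1 + \sigma_j \frac{u_{j-1}}{-u_m}) - 1)\frac{-u_m}{\sigma_j}$ whenever $v_j > 0$. Then along the resulting trajectories, the safety ratio $\sigma_j = (x_{j-1} - x_j)/\mathcal{D}(v_{j-1}, v_j)$ is constant in time on any interval where $v_j \geq v_{j-1} > 0$ (so that $\mathcal{D}(v_{j-1},v_j) = L + (v_j^2 - v_{j-1}^2)/(-2u_m)$), i.e., $\dot{\sigma}_j = 0$. -/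
theorem stmt_8 (um L t u1 : ℝ) (x1 x2 v1 v2 : ℝ → ℝ)
    (hum : um < 0) (hL : 0 < L)
    (hv : 0 < v1 t) (hvv : v1 t ≤ v2 t)
    (hx1 : HasDerivAt x1 (v1 t) t) (hx2 : HasDerivAt x2 (v2 t) t)
    (hv1 : HasDerivAt v1 u1 t)
    (hσ : (x1 t - x2 t) / (L + ((v2 t) ^ 2 - (v1 t) ^ 2) / (-2 * um)) > 0)
    (hv2 : HasDerivAt v2
      ((v1 t / v2 t *
          (1 + ((x1 t - x2 t) / (L + ((v2 t) ^ 2 - (v1 t) ^ 2) / (-2 * um))) *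
            (u1 / (-um))) - 1) *
        (-um / ((x1 t - x2 t) / (L + ((v2 t) ^ 2 - (v1 t) ^ 2) / (-2 * um))))) t)
    (hnear : ∀ᶠ s in nhds t, v1 s ≤ v2 s) :
    HasDerivAt
      (fun s => (x1 s - x2 s) / (L + ((v2 s) ^ 2 - (v1 s) ^ 2) / (-2 * um)))
      0 t := by
  have hum' : (0:ℝ) < -um := by linarith
  have hum0 : um ≠ 0 := ne_of_lt hum
  have hv2pos : 0 < v2 t := lt_of_lt_of_le hv hvv
  have hv20 : v2 t ≠ 0 := ne_of_gt hv2pos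
  set D := L + ((v2 t) ^ 2 - (v1 t) ^ 2) / (-2 * um) with hDdef
  have hDpos : 0 < D := by
    have h1 : 0 ≤ ((v2 t) ^ 2 - (v1 t) ^ 2) / (-2 * um) := by
      apply div_nonneg
      · nlinarith
      · linarith
    have : 0 < L + ((v2 t) ^ 2 - (v1 t) ^ 2) / (-2 * um) := by linarith
    simpa [hDdef] using this
  have hD0 : D ≠ 0 := ne_of_gt hDpos
  have hx0 : x1 t - x2 t ≠ 0 := by
    rcases div_pos_iff.mp hσ with ⟨h, _⟩ | ⟨_, h⟩
    · exact ne_of_gt h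
    · exact absurd h (not_lt.mpr (le_of_lt hDpos))
  set u2 := ((v1 t / v2 t * (1 + ((x1 t - x2 t) / D) * (u1 / (-um))) - 1) *
        (-um / ((x1 t - x2 t) / D))) with hu2
  have key : (2 * v2 t * u2 - 2 * v1 t * u1) / (-2 * um)
      = (v1 t - v2 t) * D / (x1 t - x2 t) := by
    rw [hu2]
    field_simp
    ring
  have hg : HasDerivAt (fun s => L + ((v2 s) ^ 2 - (v1 s) ^ 2) / (-2 * um))
      ((v1 t - v2 t) * D / (x1 t - x2 t)) t := by
    rw [← key]
    have h2 : HasDerivAt (fun s => (v2 s) ^ 2) (2 * v2 t * u2) t := by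
      have := hv2.fun_pow 2
      simpa [mul_comm, mul_assoc, mul_left_comm] using this
    have h1 : HasDerivAt (fun s => (v1 s) ^ 2) (2 * v1 t * u1) t := by
      have := hv1.fun_pow 2
      simpa [mul_comm, mul_assoc, mul_left_comm] using this
    exact ((h2.sub h1).div_const _).const_add L
  have hf : HasDerivAt (fun s => x1 s - x2 s) (v1 t - v2 t) t := hx1.sub hx2
  have hd := hf.fun_div hg hD0
  refine hd.congr_deriv ?_
  rw [← hDdef, mul_comm (x1 t - x2 t), div_mul_cancel₀ _ hx0, sub_self, zero_div]
end
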